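/- arXiv:math/0403290 — 5 statements merged into one kernel-verified Lean document; each statement's English description precedes it below -/
import Mathlib

section
/- Let f : ℝ → ℂ be continuous and integrable with f̂ supported in [0, ∞). Then for y > 0 and x ∈ ℝ, ∫_0^∞ f̂(ξ) exp(2πi (x + iy) ξ) dξ = (P_y * f)(x), the Poisson integral of f; in particular the Abel mean of the inverse Fourier transform with parameter t = y agrees with this integral. -/
open Real MeasureTheory Complex Set Filter Topology

lemma integrableOn_cexp_Ioi {c : ℂ} (hc : c.re < 0) :
    IntegrableOn (fun ξ : ℝ => Complex.exp (c * ξ)) (Ioi (0:ℝ)) := by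
  have hb : (0:ℝ) < -c.re := by linarith
  refine ((exp_neg_integrableOn_Ioi 0 hb).mono' ?_ ?_)
  · exact (Complex.continuous_exp.comp (continuous_const.mul Complex.continuous_ofReal)).aestronglyMeasurable
  · filter_upwards with ξ
    simp [Complex.norm_exp, Complex.mul_re]

lemma integral_cexp_Ioi {c : ℂ} (hc : c.re < 0) :
    ∫ ξ in Ioi (0:ℝ), Complex.exp (c * ξ) = -c⁻¹ := by
  have hc0 : c ≠ 0 := fun h => by simp [h] at hc
  have hd : ∀ ξ ∈ Ici (0:ℝ), HasDerivAt (fun ξ : ℝ => Complex.exp (c * ξ) / c)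
      (Complex.exp (c * ξ)) ξ := by
    intro ξ _
    have h1 : HasDerivAt (fun ξ : ℝ => (ξ : ℂ)) 1 ξ := Complex.ofRealCLM.hasDerivAt
    have h2 := ((h1.const_mul c).cexp).div_const c
    simpa [mul_comm, mul_div_assoc, mul_div_cancel_left₀ _ hc0] using h2
  have hlim : Tendsto (fun ξ : ℝ => Complex.exp (c * ξ) / c) atTop (𝓝 0) := by
    rw [tendsto_zero_iff_norm_tendsto_zero]
    have : (fun ξ : ℝ => ‖Complex.exp (c * ξ) / c‖) = fun ξ => Real.exp (c.re * ξ) / ‖c‖ := by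
      funext ξ; simp [Complex.norm_exp, Complex.mul_re]
    rw [this]
    have : Tendsto (fun ξ : ℝ => Real.exp (c.re * ξ)) atTop (𝓝 0) := by
      apply Real.tendsto_exp_atBot.comp
      exact (tendsto_const_mul_atBot_of_neg hc).mpr tendsto_id
    simpa using this.div_const ‖c‖
  have := integral_Ioi_of_hasDerivAt_of_tendsto' hd (integrableOn_cexp_Ioi hc) hlim
  rw [this]
  simp only [Complex.ofReal_zero, mul_zero, Complex.exp_zero, zero_sub]
  ring

lemma integral_cexp_Iic {c : ℂ} (hc : 0 < c.re) :
    ∫ ξ in Iic (0:ℝ), Complex.exp (c * ξ) = c⁻¹ := by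
  have : ∫ ξ in Iic (0:ℝ), Complex.exp (c * ξ)
      = ∫ ξ in Ioi (0:ℝ), Complex.exp (-c * ξ) := by
    rw [show ((0:ℝ) = -0) by ring, ← integral_comp_neg_Ioi]
    simp
  rw [this, integral_cexp_Ioi (by simpa using hc), inv_neg, neg_neg]

lemma integrableOn_cexp_Iic {c : ℂ} (hc : 0 < c.re) :
    IntegrableOn (fun ξ : ℝ => Complex.exp (c * ξ)) (Iic (0:ℝ)) := by
  have h1 : IntegrableOn (fun ξ : ℝ => Complex.exp (-c * ξ)) (Ioi (0:ℝ)) :=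
    integrableOn_cexp_Ioi (by simpa using hc)
  rw [← integrable_indicator_iff measurableSet_Ioi] at h1
  have h2 := h1.comp_neg
  apply IntegrableOn.congr_set_ae (t := Iio 0) ?_ Iio_ae_eq_Iic.symm
  rw [← integrable_indicator_iff measurableSet_Iio]
  convert h2 using 1
  · rfl
  funext ξ
  by_cases h : ξ < 0
  · have h' : (-ξ) ∈ Ioi (0:ℝ) := by simp [Set.mem_Ioi]; linarith
    rw [Set.indicator_of_mem (Set.mem_Iio.mpr h), Set.indicator_of_mem h']
    push_cast; ring_nf
  · have h' : (-ξ) ∉ Ioi (0:ℝ) := by simp [Set.mem_Ioi]; linarith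
    rw [Set.indicator_of_notMem (by simpa using h), Set.indicator_of_notMem h']

lemma kernel_eq {y : ℝ} (hy : 0 < y) (u : ℝ) :
    ∫ ξ : ℝ, Complex.exp (2*π*Complex.I*ξ*u - 2*π*y*|ξ|) =
      (((1/π) * (y/(u^2+y^2)) : ℝ) : ℂ) := by
  have hπ : (π:ℝ) ≠ 0 := pi_ne_zero
  have hre1 : (2*(π:ℂ)*Complex.I*u - 2*π*y).re = -(2*π*y) := by simp
  have hre2 : (2*(π:ℂ)*Complex.I*u + 2*π*y).re = 2*π*y := by simp
  have hπy : (0:ℝ) < 2*π*y := by positivity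
  have hr1 : (2*(π:ℂ)*Complex.I*u - 2*π*y).re < 0 := by rw [hre1]; linarith
  have hr2 : 0 < (2*(π:ℂ)*Complex.I*u + 2*π*y).re := by rw [hre2]; linarith
  have hIoi_eq : Set.EqOn (fun ξ : ℝ => Complex.exp (2*π*Complex.I*ξ*u - 2*π*y*|ξ|))
      (fun ξ : ℝ => Complex.exp ((2*(π:ℂ)*Complex.I*u - 2*π*y) * ξ)) (Ioi 0) := by
    intro ξ hξ
    simp only
    rw [abs_of_pos hξ]
    congr 1
    push_cast; ring
  have hIic_eq : Set.EqOn (fun ξ : ℝ => Complex.exp (2*π*Complex.I*ξ*u - 2*π*y*|ξ|))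
      (fun ξ : ℝ => Complex.exp ((2*(π:ℂ)*Complex.I*u + 2*π*y) * ξ)) (Iic 0) := by
    intro ξ hξ
    simp only
    rw [abs_of_nonpos hξ]
    congr 1
    push_cast; ring
  have hint1 : IntegrableOn (fun ξ : ℝ => Complex.exp (2*π*Complex.I*ξ*u - 2*π*y*|ξ|))
      (Ioi (0:ℝ)) :=
    ((integrableOn_cexp_Ioi hr1).congr_fun hIoi_eq.symm measurableSet_Ioi)
  have hint2 : IntegrableOn (fun ξ : ℝ => Complex.exp (2*π*Complex.I*ξ*u - 2*π*y*|ξ|))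
      (Iic (0:ℝ)) :=
    ((integrableOn_cexp_Iic hr2).congr_fun hIic_eq.symm measurableSet_Iic)
  rw [← intervalIntegral.integral_Iic_add_Ioi hint2 hint1,
    setIntegral_congr_fun measurableSet_Ioi hIoi_eq,
    setIntegral_congr_fun measurableSet_Iic hIic_eq,
    integral_cexp_Ioi hr1, integral_cexp_Iic hr2]
  have h10 : (2*(π:ℂ)*Complex.I*u - 2*π*y) ≠ 0 := fun h => by
    rw [h] at hre1; simp at hre1
    linarith
  have h20 : (2*(π:ℂ)*Complex.I*u + 2*π*y) ≠ 0 := fun h => by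
    rw [h] at hre2; simp at hre2
    linarith
  have hden : u^2+y^2 ≠ 0 := by positivity
  have hdenC : ((u:ℂ)^2+(y:ℂ)^2) ≠ 0 := by
    rw [show ((u:ℂ)^2+(y:ℂ)^2) = ((u^2+y^2 : ℝ) : ℂ) by push_cast; ring]
    exact_mod_cast hden
  have hπC : ((π:ℂ)) ≠ 0 := by exact_mod_cast hπ
  field_simp [h10, h20, hπC, hdenC]
  ring_nf
  have ha : (I * ↑u + ↑y : ℂ) ≠ 0 := fun h => h20 (by linear_combination 2*(π:ℂ)*h)
  have hb : (I * ↑u - ↑y : ℂ) ≠ 0 := fun h => h10 (by linear_combination 2*(π:ℂ)*h)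
  have hd2 : ((y:ℂ) ^ 2 * π + π * u ^ 2) ≠ 0 := by
    rw [show ((y:ℂ) ^ 2 * π + π * u ^ 2) = π * ((u:ℂ)^2+(y:ℂ)^2) by ring]; exact mul_ne_zero hπC hdenC
  rw [inv_sub_inv ha hb]
  push_cast
  rw [div_eq_iff (mul_ne_zero ha hb)]
  have e := mul_inv_cancel₀ hd2
  linear_combination (2*(y:ℂ))*e - (2*(π:ℂ)*y*(((y:ℂ) ^ 2 * π + π * u ^ 2))⁻¹*u^2) * I_sq

lemma integrable_exp_neg_abs {b : ℝ} (hb : 0 < b) :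
    Integrable (fun ξ : ℝ => Real.exp (-b * |ξ|)) := by
  have h1 : IntegrableOn (fun ξ : ℝ => Real.exp (-b * |ξ|)) (Ioi 0) := by
    refine (exp_neg_integrableOn_Ioi 0 hb).congr_fun ?_ measurableSet_Ioi
    intro ξ hξ
    simp only
    rw [abs_of_pos hξ]
  have h2 : IntegrableOn (fun ξ : ℝ => Real.exp (-b * |ξ|)) (Iic 0) := by
    have h : IntegrableOn (fun ξ : ℝ => ‖Complex.exp ((b:ℂ) * ξ)‖) (Iic 0) :=
      (integrableOn_cexp_Iic (c := (b:ℂ)) (by simpa using hb)).norm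
    refine h.congr_fun ?_ measurableSet_Iic
    intro ξ hξ
    simp only [Complex.norm_exp]
    rw [abs_of_nonpos hξ]
    congr 1
    simp [Complex.mul_re]
  have h3 : IntegrableOn (fun ξ : ℝ => Real.exp (-b * |ξ|)) (Iic 0 ∪ Ioi 0) :=
    h2.union h1
  rw [Iic_union_Ioi] at h3
  exact integrableOn_univ.mp h3

theorem upper_integral_eq_poisson (f : ℝ → ℂ) (hc : Continuous f) (hi : Integrable f)
    (fhat : ℝ → ℂ)
    (hfhat : ∀ ξ, fhat ξ = ∫ x, f x * Complex.exp (-(2 * π * Complex.I * ξ * x)))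
    (hsupp : ∀ ξ < (0 : ℝ), fhat ξ = 0) (x y : ℝ) (hy : 0 < y) :
    ∫ ξ in Set.Ioi (0 : ℝ),
        fhat ξ * Complex.exp (2 * π * Complex.I * (x + Complex.I * y) * ξ) =
      ∫ u : ℝ, ((1 / π) * (y / (u ^ 2 + y ^ 2)) : ℝ) * f (x - u) := by
  have h2πy : (0:ℝ) < 2*π*y := by positivity
  set F : ℝ → ℝ → ℂ := fun ξ t =>
    f t * Complex.exp (2*π*Complex.I*ξ*((x - t : ℝ) : ℂ) - 2*π*y*|ξ|) with hF
  set G : ℝ → ℂ := fun ξ => fhat ξ * Complex.exp (2*π*Complex.I*ξ*x - 2*π*y*|ξ|) with hG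
  have stepA1 : (∫ ξ in Set.Ioi (0:ℝ),
      fhat ξ * Complex.exp (2 * π * Complex.I * (x + Complex.I * y) * ξ))
      = ∫ ξ in Set.Ioi (0:ℝ), G ξ := by
    refine setIntegral_congr_fun measurableSet_Ioi (fun ξ hξ => ?_)
    simp only [hG]
    congr 1
    rw [abs_of_pos hξ]
    congr 1
    linear_combination (2*(π:ℂ)*y*ξ) * Complex.I_sq
  have stepA2 : ∫ ξ in Set.Ioi (0:ℝ), G ξ = ∫ ξ, G ξ := by
    rw [← integral_indicator measurableSet_Ioi]
    refine integral_congr_ae ?_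
    have h0 : ∀ᵐ ξ : ℝ, ξ ≠ (0:ℝ) := by
      refine compl_mem_ae_iff.mpr ?_
      exact measure_mono_null (fun z (hz : z = 0) => hz) (measure_singleton (0:ℝ))
    filter_upwards [h0] with ξ hξ
    rcases lt_or_gt_of_ne hξ with h|h
    · rw [Set.indicator_of_notMem (by simpa using not_lt.mpr h.le)]
      simp [hG, hsupp ξ h]
    · rw [Set.indicator_of_mem (Set.mem_Ioi.mpr h)]
  have hGeq : ∀ ξ : ℝ, G ξ = ∫ t, F ξ t := by
    intro ξ
    simp only [hG, hF]
    rw [hfhat ξ, ← integral_mul_const]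
    congr 1
    funext t
    rw [mul_assoc, ← Complex.exp_add]
    congr 2
    push_cast
    ring
  have hFcont : Continuous (Function.uncurry F) := by
    apply Continuous.mul (hc.comp continuous_snd)
    apply Complex.continuous_exp.comp
    fun_prop
  have hFint : Integrable (Function.uncurry F) (volume.prod volume) := by
    refine Integrable.mono'
      (g := fun p : ℝ×ℝ => Real.exp (-(2*π*y)*|p.1|) * ‖f p.2‖) ?_
      hFcont.aestronglyMeasurable ?_
    · exact (integrable_exp_neg_abs h2πy).mul_prod hi.norm
    · filter_upwards with p
      have hnorm : ‖Complex.exp (2*π*Complex.I*p.1*((x - p.2 : ℝ) : ℂ) - 2*π*y*|p.1|)‖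
          = Real.exp (-(2*π*y)*|p.1|) := by
        rw [Complex.norm_exp]
        congr 1
        simp [Complex.sub_re, Complex.mul_re, Complex.mul_im]
      refine le_of_eq ?_
      simp only [Function.uncurry, hF]
      rw [norm_mul, hnorm, mul_comm]
  have hinner : ∀ t : ℝ, ∫ ξ, F ξ t
      = f t * (((1/π) * (y/((x-t)^2+y^2)) : ℝ) : ℂ) := by
    intro t
    simp only [hF]
    rw [integral_const_mul, kernel_eq hy (x - t)]
  have stepC : (∫ u : ℝ, (((1 / π) * (y / (u ^ 2 + y ^ 2)) : ℝ) : ℂ) * f (x - u))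
      = ∫ t : ℝ, f t * (((1/π) * (y/((x-t)^2+y^2)) : ℝ) : ℂ) := by
    rw [← integral_sub_left_eq_self
      (fun u : ℝ => (((1 / π) * (y / (u ^ 2 + y ^ 2)) : ℝ) : ℂ) * f (x - u)) volume x]
    refine integral_congr_ae (Filter.Eventually.of_forall fun t => ?_)
    simp only [sub_sub_cancel]
    ring
  rw [stepA1, stepA2, integral_congr_ae (Filter.Eventually.of_forall hGeq),
    integral_integral_swap hFint, integral_congr_ae (Filter.Eventually.of_forall hinner),
    ← stepC]
end

section
/- Let f : ℝ → ℂ be continuous and integrable with f̂ supported in (-∞, 0]. Then F(z) = ∫_{-∞}^0 f̂(ξ) exp(2πi z ξ) dξ is holomorphic on the lower half-plane {z : Im z < 0}. -/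
open Real MeasureTheory Complex

/-- `exp (c * x)` is integrable on `Iio 0` when `c > 0`. -/
lemma exp_mul_integrableOn_Iio {c : ℝ} (hc : 0 < c) :
    IntegrableOn (fun x : ℝ => Real.exp (c * x)) (Set.Iio 0) := by
  rw [← (Measure.measurePreserving_neg (volume : Measure ℝ)).integrableOn_comp_preimage
      (Homeomorph.neg ℝ).measurableEmbedding]
  have hs : (Neg.neg ⁻¹' Set.Iio (0:ℝ)) = Set.Ioi 0 := by ext x; simp
  rw [hs]
  simp only [Function.comp_def, mul_neg]
  simpa [neg_mul] using exp_neg_integrableOn_Ioi (0 : ℝ) hc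

/-- `|x| * exp (c * x)` is integrable on `Iio 0` when `c > 0`. -/
lemma abs_mul_exp_mul_integrableOn_Iio {c : ℝ} (hc : 0 < c) :
    IntegrableOn (fun x : ℝ => |x| * Real.exp (c * x)) (Set.Iio 0) := by
  rw [← (Measure.measurePreserving_neg (volume : Measure ℝ)).integrableOn_comp_preimage
      (Homeomorph.neg ℝ).measurableEmbedding]
  have hs : (Neg.neg ⁻¹' Set.Iio (0:ℝ)) = Set.Ioi 0 := by ext x; simp
  rw [hs]
  simp only [Function.comp_def, mul_neg, abs_neg]
  have h := integrableOn_rpow_mul_exp_neg_mul_rpow (s := 1) (p := 1)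
      (by norm_num) zero_lt_one hc
  apply h.congr_fun ?_ measurableSet_Ioi
  intro x hx
  simp only [Set.mem_Ioi] at hx
  simp only [Real.rpow_one, _root_.abs_of_pos hx, neg_mul]

theorem holomorphic_lower_half_plane (f : ℝ → ℂ) (hc : Continuous f) (hi : Integrable f)
    (fhat : ℝ → ℂ)
    (hfhat : ∀ ξ, fhat ξ = ∫ x, f x * Complex.exp (-(2 * π * Complex.I * ξ * x)))
    (hsupp : ∀ ξ > (0 : ℝ), fhat ξ = 0) :
    DifferentiableOn ℂ
      (fun z : ℂ => ∫ ξ in Set.Iio (0 : ℝ), fhat ξ * Complex.exp (2 * π * Complex.I * z * ξ))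
      {z : ℂ | z.im < 0} := by
  -- fhat is strongly measurable
  have hfe : fhat = fun ξ : ℝ => ∫ x, f x * Complex.exp (-(2 * π * Complex.I * ξ * x)) :=
    funext hfhat
  have hfm : StronglyMeasurable fhat := by
    rw [hfe]
    have hcont : Continuous
        (fun p : ℝ × ℝ => f p.2 * Complex.exp (-(2 * π * Complex.I * p.1 * p.2))) := by
      apply hc.comp continuous_snd |>.mul
      apply Complex.continuous_exp.comp
      continuity
    exact hcont.stronglyMeasurable.integral_prod_right'
  -- fhat is bounded by C := ∫ ‖f‖
  set C : ℝ := ∫ x, ‖f x‖ with hCdef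
  have hC : ∀ ξ : ℝ, ‖fhat ξ‖ ≤ C := by
    intro ξ
    rw [hfhat]
    refine (norm_integral_le_integral_norm _).trans_eq ?_
    congr 1
    ext x
    have : ‖Complex.exp (-(2 * π * Complex.I * ξ * x))‖ = 1 := by
      rw [Complex.norm_exp]
      have : (-(2 * π * Complex.I * ξ * x)).re = 0 := by simp
      rw [this, Real.exp_zero]
    rw [norm_mul, this, mul_one]
  have hC0 : 0 ≤ C := integral_nonneg fun x => norm_nonneg _
  intro z₀ hz₀
  simp only [Set.mem_setOf_eq] at hz₀
  set δ : ℝ := -z₀.im / 2 with hδdef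
  have hδ : 0 < δ := by simp only [hδdef]; linarith
  have him : ∀ z ∈ Metric.ball z₀ δ, z.im < -δ := by
    intro z hz
    have h1 : |(z - z₀).im| ≤ ‖z - z₀‖ := Complex.abs_im_le_norm _
    rw [Metric.mem_ball, Complex.dist_eq] at hz
    have h2 : |z.im - z₀.im| < δ := by
      simpa using lt_of_le_of_lt h1 hz
    have := abs_lt.mp h2
    simp only [hδdef]
    linarith [this.2]
  -- the key bound on the exponential
  have hexp : ∀ z : ℂ, z.im < -δ → ∀ ξ : ℝ, ξ < 0 →
      ‖Complex.exp (2 * π * Complex.I * z * ξ)‖ ≤ Real.exp (2 * π * δ * ξ) := by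
    intro z hz ξ hξ
    rw [Complex.norm_exp]
    apply Real.exp_le_exp.mpr
    have : (2 * π * Complex.I * z * ξ).re = 2 * π * ξ * (-z.im) := by
      simp [Complex.mul_re, Complex.mul_im]
      ring
    rw [this]
    have h1 : δ ≤ -z.im := by linarith
    have h2 : 2 * π * ξ < 0 := by
      have := Real.pi_pos
      nlinarith
    nlinarith
  -- derivative candidate
  set F : ℂ → ℝ → ℂ := fun z ξ => fhat ξ * Complex.exp (2 * π * Complex.I * z * ξ) with hF
  set F' : ℂ → ℝ → ℂ :=
    fun z ξ => fhat ξ * (2 * π * Complex.I * ξ * Complex.exp (2 * π * Complex.I * z * ξ))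
    with hF'
  have hderiv : ∀ (ξ : ℝ) (z : ℂ), HasDerivAt (fun w => F w ξ) (F' z ξ) z := by
    intro ξ z
    have h0 : HasDerivAt (fun w : ℂ => 2 * π * Complex.I * w * ξ)
        (2 * π * Complex.I * ξ) z := by
      have := (hasDerivAt_mul_const (ξ : ℂ)).const_mul (2 * π * Complex.I) (x := z)
      simpa [mul_assoc] using this
    have h1 := (h0.cexp).const_mul (fhat ξ)
    convert h1 using 1
    show fhat ξ * (2 * π * Complex.I * ξ * Complex.exp (2 * π * Complex.I * z * ξ)) = _
    ring
    all_goals rfl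
  have hmeasF : ∀ z : ℂ, AEStronglyMeasurable (F z) (volume.restrict (Set.Iio (0:ℝ))) := by
    intro z
    exact ((hfm.mul (Continuous.stronglyMeasurable (by fun_prop))).aestronglyMeasurable).restrict
  have hz₀δ : z₀.im < -δ := by simp only [hδdef]; linarith
  -- apply the dominated-derivative theorem
  have key := hasDerivAt_integral_of_dominated_loc_of_deriv_le (F := F) (F' := F')
      (μ := volume.restrict (Set.Iio (0:ℝ))) (x₀ := z₀)
      (bound := fun ξ => C * (2 * π * |ξ|) * Real.exp (2 * π * δ * ξ)) (Metric.ball_mem_nhds z₀ hδ)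
      (Filter.Eventually.of_forall hmeasF)
      ?_ ?_ ?_ ?_ ?_
  · exact (key.2.differentiableAt).differentiableWithinAt
  · -- Integrable (F z₀)
    apply Integrable.mono' ((exp_mul_integrableOn_Iio (by positivity : 0 < 2*π*δ)).const_mul C)
    · exact hmeasF z₀
    · filter_upwards [ae_restrict_mem measurableSet_Iio] with ξ hξ
      simp only [Set.mem_Iio] at hξ
      rw [hF, norm_mul]
      calc ‖fhat ξ‖ * ‖Complex.exp (2 * π * Complex.I * z₀ * ξ)‖
          ≤ C * Real.exp (2 * π * δ * ξ) :=
            mul_le_mul (hC ξ) (hexp z₀ hz₀δ ξ hξ) (norm_nonneg _) hC0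
        _ = C * Real.exp (2 * π * δ * ξ) := rfl
  · -- AEStronglyMeasurable (F' z₀)
    exact ((hfm.mul (Continuous.stronglyMeasurable (by fun_prop))).aestronglyMeasurable).restrict
  · -- the bound
    filter_upwards [ae_restrict_mem measurableSet_Iio] with ξ hξ
    simp only [Set.mem_Iio] at hξ
    intro z hz
    rw [hF', norm_mul, norm_mul]
    have h1 : ‖(2 : ℂ) * π * Complex.I * ξ‖ = 2 * π * |ξ| := by
      simp [map_mul, Complex.norm_real,
        _root_.abs_of_nonneg Real.pi_pos.le]
    rw [h1]
    calc ‖fhat ξ‖ * (2 * π * |ξ| * ‖Complex.exp (2 * π * Complex.I * z * ξ)‖)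
        ≤ C * (2 * π * |ξ| * Real.exp (2 * π * δ * ξ)) := by
          apply mul_le_mul (hC ξ) ?_ (by positivity) hC0
          exact mul_le_mul_of_nonneg_left (hexp z (him z hz) ξ hξ) (by positivity)
      _ = C * (2 * π * |ξ|) * Real.exp (2 * π * δ * ξ) := by ring
  · -- bound integrable
    have heq : (fun ξ : ℝ => C * (2 * π * |ξ|) * Real.exp (2 * π * δ * ξ))
        = fun ξ : ℝ => (C * (2 * π)) * (|ξ| * Real.exp (2 * π * δ * ξ)) := by
      funext ξ; ring
    rw [heq]
    exact (abs_mul_exp_mul_integrableOn_Iio (by positivity : 0 < 2*π*δ)).const_mul (C * (2*π))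
  · -- differentiability
    exact Filter.Eventually.of_forall fun ξ => fun z _ => hderiv ξ z
end

section
/- Let f : ℝ → ℂ be continuous and integrable with f̂ supported in a compact interval [a,b]. Then F(z) = ∫_a^b f̂(ξ) exp(2πi z ξ) dξ defines an entire holomorphic function on ℂ, and F(x) = f(x) for real x. -/
open Real MeasureTheory Complex intervalIntegral

open scoped FourierTransform

theorem entire_of_compactly_supported_fourier (f : ℝ → ℂ) (hc : Continuous f)
    (hi : Integrable f) (a b : ℝ) (hab : a ≤ b) (fhat : ℝ → ℂ)
    (hfhat : ∀ ξ, fhat ξ = ∫ x, f x * Complex.exp (-(2 * π * Complex.I * ξ * x)))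
    (hsupp : ∀ ξ : ℝ, ξ ∉ Set.Icc a b → fhat ξ = 0) :
    Differentiable ℂ
      (fun z : ℂ => ∫ ξ in a..b, fhat ξ * Complex.exp (2 * π * Complex.I * z * ξ)) ∧
      ∀ x : ℝ, (∫ ξ in a..b, fhat ξ * Complex.exp (2 * π * Complex.I * (x : ℂ) * ξ)) = f x := by
  have hfh : fhat = 𝓕 f := by
    ext ξ
    rw [hfhat, Real.fourier_eq']
    refine MeasureTheory.integral_congr_ae (Filter.Eventually.of_forall fun x => ?_)
    simp only [smul_eq_mul, RCLike.inner_apply, starRingEnd_apply, star_trivial]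
    rw [mul_comm]
    congr 1
    push_cast
    ring
  have hcont : Continuous fhat := by
    rw [hfh]
    show Continuous (VectorFourier.fourierIntegral _ volume (innerₗ ℝ) f)
    exact VectorFourier.fourierIntegral_continuous (L := innerₗ ℝ) Real.continuous_fourierChar
      (by
        simp only [innerₗ_apply_apply]
        exact continuous_inner (𝕜 := ℝ) (E := ℝ)) hi
  have hsub : Function.support fhat ⊆ Set.Icc a b := by
    intro ξ hξ
    by_contra h
    exact hξ (hsupp ξ h)
  have hI : Integrable fhat := by
    rw [← integrableOn_iff_integrable_of_support_subset hsub]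
    exact hcont.continuousOn.integrableOn_compact isCompact_Icc
  -- Part 2: Fourier inversion
  have key : ∀ x : ℝ,
      (∫ ξ in a..b, fhat ξ * Complex.exp (2 * π * Complex.I * (x : ℂ) * ξ)) = f x := by
    intro x
    have hinv : 𝓕⁻ (𝓕 f) x = f x :=
      MeasureTheory.Integrable.fourierInv_fourier_eq hi (hfh ▸ hI) hc.continuousAt
    rw [Real.fourierInv_eq'] at hinv
    rw [intervalIntegral.integral_of_le hab, ← integral_Icc_eq_integral_Ioc,
      setIntegral_eq_integral_of_forall_compl_eq_zero
        (fun ξ hξ => by rw [hsupp ξ hξ, zero_mul])]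
    rw [← hinv]
    refine MeasureTheory.integral_congr_ae (Filter.Eventually.of_forall fun ξ => ?_)
    simp only [smul_eq_mul, RCLike.inner_apply, starRingEnd_apply, star_trivial, hfh]
    rw [mul_comm]
    congr 1
    push_cast
    ring
  refine ⟨?_, key⟩
  -- Part 1: differentiability
  intro z₀
  obtain ⟨C, hC⟩ := isCompact_Icc.exists_bound_of_continuousOn (s := Set.Icc a b)
    hcont.continuousOn
  set M : ℝ := max |a| |b| with hM
  have hMnn : 0 ≤ M := le_trans (abs_nonneg a) (le_max_left _ _)
  have hMle : ∀ ξ ∈ Set.uIoc a b, |ξ| ≤ M := by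
    intro ξ hξ
    rw [Set.uIoc_of_le hab] at hξ
    rw [abs_le]
    constructor
    · linarith [neg_abs_le a, hξ.1.le, le_max_left |a| |b|]
    · linarith [le_abs_self b, hξ.2, le_max_right |a| |b|]
  set B : ℝ := |C| * (Real.exp (2 * π * (|z₀.im| + 1) * M) * (2 * π * M)) with hB
  set F' : ℂ → ℝ → ℂ := fun z ξ =>
    fhat ξ * (Complex.exp (2 * π * Complex.I * z * ξ) * (2 * π * Complex.I * ξ)) with hF'
  have hnorm : ∀ ξ ∈ Set.uIoc a b, ∀ z ∈ Metric.ball z₀ 1, ‖F' z ξ‖ ≤ B := by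
    intro ξ hξ z hz
    have hξI : ξ ∈ Set.Icc a b := by
      rw [Set.uIoc_of_le hab] at hξ
      exact Set.Ioc_subset_Icc_self hξ
    have him : |z.im| ≤ |z₀.im| + 1 := by
      have h1 : |z.im - z₀.im| ≤ ‖z - z₀‖ := by
        simpa using Complex.abs_im_le_norm (z - z₀)
      have h2 : ‖z - z₀‖ < 1 := by simpa [Metric.mem_ball, dist_eq_norm] using hz
      have := abs_sub_abs_le_abs_sub z.im z₀.im
      linarith
    have hre : (2 * ↑π * Complex.I * z * ↑ξ).re = -(2 * π * z.im * ξ) := by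
      simp [Complex.mul_re, Complex.mul_im]
    have hen : ‖Complex.exp (2 * ↑π * Complex.I * z * ↑ξ)‖
        = Real.exp (-(2 * π * z.im * ξ)) := by
      rw [Complex.norm_exp, hre]
    have hmn : ‖(2 * ↑π * Complex.I * ↑ξ : ℂ)‖ = 2 * π * |ξ| := by
      simp [norm_mul, _root_.abs_of_nonneg pi_pos.le]
    have hexp : Real.exp (-(2 * π * z.im * ξ)) ≤ Real.exp (2 * π * (|z₀.im| + 1) * M) := by
      apply Real.exp_le_exp.2
      have h1 : -(z.im * ξ) ≤ |z.im| * |ξ| := by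
        rw [← abs_mul]; exact neg_le_abs _
      have h2 := hMle ξ hξ
      have h3 : |z.im| * |ξ| ≤ (|z₀.im| + 1) * M :=
        mul_le_mul him h2 (abs_nonneg ξ) (by positivity)
      nlinarith [pi_pos, h1, h3]
    calc ‖F' z ξ‖ = ‖fhat ξ‖ * (Real.exp (-(2 * π * z.im * ξ)) * (2 * π * |ξ|)) := by
          rw [hF']; simp only [norm_mul, hen, hmn]
      _ ≤ |C| * (Real.exp (2 * π * (|z₀.im| + 1) * M) * (2 * π * M)) := by
          gcongr
          · exact (hC ξ hξI).trans (le_abs_self C)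
          · exact hMle ξ hξ
      _ = B := rfl
  have hFc : ∀ z : ℂ, Continuous fun ξ : ℝ => fhat ξ * Complex.exp (2 * π * Complex.I * z * ξ) := by
    intro z
    exact hcont.mul (by fun_prop)
  have hF'c : Continuous fun ξ : ℝ => F' z₀ ξ := by
    rw [hF']
    fun_prop
  have := intervalIntegral.hasDerivAt_integral_of_dominated_loc_of_deriv_le
    (F := fun z ξ => fhat ξ * Complex.exp (2 * π * Complex.I * z * ξ)) (F' := F')
    (x₀ := z₀) (a := a) (b := b) (μ := volume) (bound := fun _ => B)
    (Metric.ball_mem_nhds z₀ one_pos)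
    (Filter.Eventually.of_forall fun z => ((hFc z).aestronglyMeasurable).restrict)
    ((hFc z₀).intervalIntegrable a b)
    (hF'c.aestronglyMeasurable.restrict)
    (Filter.Eventually.of_forall fun ξ hξ z hz => hnorm ξ hξ z hz)
    (intervalIntegrable_const)
    (Filter.Eventually.of_forall fun ξ hξ z hz => by
      have h1 : HasDerivAt (fun z : ℂ => 2 * π * Complex.I * z * ξ)
          (2 * π * Complex.I * ξ) z := by
        simpa using ((hasDerivAt_id z).const_mul (2 * ↑π * Complex.I)).mul_const (ξ : ℂ)
      exact (h1.cexp).const_mul (fhat ξ))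
  exact this.2.differentiableAt
end

section
/- Phragmén–Lindelöf growth bound: let f be an entire function and σ > 0 such that for every ε > 0 there exists A_ε > 0 with |f(z)| ≤ A_ε exp((σ+ε)|z|) for all z ∈ ℂ, and suppose |f(x)| ≤ B for all real x. Then |f(x + iy)| ≤ B exp(σ|y|) for all real x, y. -/
open Real Complex

open Filter Asymptotics in
lemma phragmen_lindelof_upper (f : ℂ → ℂ) (hf : Differentiable ℂ f)
    (σ : ℝ) (hσ : 0 < σ) (B : ℝ) (hB : 0 < B)
    (hgrowth : ∀ ε > (0 : ℝ), ∃ A > (0 : ℝ), ∀ z : ℂ, ‖f z‖ ≤ A * Real.exp ((σ + ε) * ‖z‖))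
    (hreal : ∀ x : ℝ, ‖f x‖ ≤ B) :
    ∀ z : ℂ, 0 ≤ z.im → ‖f z‖ ≤ B * Real.exp (σ * z.im) := by
  intro z hz
  have key : ∀ ε > (0 : ℝ), ‖f z‖ ≤ B * Real.exp ((σ + ε) * z.im) := by
    intro ε hε
    obtain ⟨A, hA, hAb⟩ := hgrowth ε hε
    have hσε : (0:ℝ) < σ + ε := by linarith
    set g : ℂ → ℂ := fun w => Complex.exp (-(σ + ε) * w) * f (Complex.I * w) with hg
    have hgd : Differentiable ℂ g := by
      exact (Complex.differentiable_exp.comp ((differentiable_const _).mul differentiable_id)).mul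
        (hf.comp ((differentiable_const _).mul differentiable_id))
    have hgnorm : ∀ w : ℂ, ‖g w‖ = Real.exp (-(σ + ε) * w.re) * ‖f (Complex.I * w)‖ := by
      intro w
      simp [hg, norm_mul, Complex.norm_exp]
    have hexp : ∃ c < (2 : ℝ), ∃ B',
        g =O[Bornology.cobounded ℂ ⊓ 𝓟 {w : ℂ | 0 < w.re}]
          fun w => Real.exp (B' * ‖w‖ ^ c) := by
      refine ⟨1, by norm_num, 2 * (σ + ε), ?_⟩
      refine IsBigO.mono (isBigO_of_le' (c := A) _ fun w => ?_) inf_le_left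
      rw [hgnorm]
      have h1 : ‖f (Complex.I * w)‖ ≤ A * Real.exp ((σ + ε) * ‖w‖) := by
        have := hAb (Complex.I * w)
        simpa [norm_mul] using this
      have h2 : Real.exp (-(σ + ε) * w.re) ≤ Real.exp ((σ + ε) * ‖w‖) := by
        apply Real.exp_le_exp.2
        have : |w.re| ≤ ‖w‖ := Complex.abs_re_le_norm w
        nlinarith [abs_nonneg w.re, neg_abs_le w.re]
      calc Real.exp (-(σ + ε) * w.re) * ‖f (Complex.I * w)‖
          ≤ Real.exp ((σ + ε) * ‖w‖) * (A * Real.exp ((σ + ε) * ‖w‖)) := by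
            apply mul_le_mul h2 h1 (norm_nonneg _) (Real.exp_pos _).le
        _ = A * Real.exp (2 * (σ + ε) * ‖w‖) := by
            rw [mul_left_comm, ← Real.exp_add]; ring_nf
        _ ≤ A * ‖Real.exp (2 * (σ + ε) * ‖w‖ ^ (1:ℝ))‖ := by
            rw [Real.rpow_one, Real.norm_eq_abs, Real.abs_exp]
    have hre : IsBoundedUnder (· ≤ ·) atTop fun x : ℝ => ‖g x‖ := by
      refine isBoundedUnder_of_eventually_le (a := A) ?_
      filter_upwards [eventually_ge_atTop (0:ℝ)] with x hx
      rw [hgnorm]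
      have h1 : ‖f (Complex.I * x)‖ ≤ A * Real.exp ((σ + ε) * x) := by
        have := hAb (Complex.I * x)
        simpa [norm_mul, _root_.abs_of_nonneg hx] using this
      calc Real.exp (-(σ + ε) * (x:ℂ).re) * ‖f (Complex.I * x)‖
          ≤ Real.exp (-(σ + ε) * x) * (A * Real.exp ((σ + ε) * x)) := by
            apply mul_le_mul_of_nonneg_left _ (Real.exp_pos _).le
            · simpa using h1
        _ = A := by
            rw [mul_comm A, ← mul_assoc, ← Real.exp_add, neg_mul, neg_add_cancel,
              Real.exp_zero, one_mul]
    have him : ∀ x : ℝ, ‖g (x * Complex.I)‖ ≤ B := by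
      intro x
      rw [hgnorm]
      have h1 : Complex.I * (x * Complex.I) = ((-x : ℝ) : ℂ) := by
        push_cast; ring_nf; simp [Complex.I_sq]
      rw [h1]
      have : ((x:ℂ) * Complex.I).re = 0 := by simp
      rw [this, mul_zero, Real.exp_zero, one_mul]
      exact hreal (-x)
    have hz' : 0 ≤ (-Complex.I * z).re := by simpa using hz
    have hbound := PhragmenLindelof.right_half_plane_of_bounded_on_real
      hgd.diffContOnCl hexp hre him hz'
    have h2 : Complex.I * (-Complex.I * z) = z := by ring_nf; simp [Complex.I_sq]
    rw [hgnorm, h2] at hbound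
    have h3 : (-Complex.I * z).re = z.im := by simp
    rw [h3] at hbound
    have hepos := Real.exp_pos (-(σ + ε) * z.im)
    rw [← le_div_iff₀' hepos] at hbound
    calc ‖f z‖ ≤ B / Real.exp (-(σ + ε) * z.im) := hbound
      _ = B * Real.exp ((σ + ε) * z.im) := by
          rw [neg_mul, Real.exp_neg, div_eq_mul_inv, inv_inv]
  have htend : Tendsto (fun ε : ℝ => B * Real.exp ((σ + ε) * z.im)) (nhdsWithin 0 (Set.Ioi 0))
      (nhds (B * Real.exp (σ * z.im))) := by
    have : Continuous fun ε : ℝ => B * Real.exp ((σ + ε) * z.im) := by continuity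
    have := this.tendsto 0
    simp only [add_zero] at this
    exact this.mono_left nhdsWithin_le_nhds
  refine ge_of_tendsto htend ?_
  filter_upwards [self_mem_nhdsWithin] with ε hε
  exact key ε hε

theorem phragmen_lindelof_entire (f : ℂ → ℂ) (hf : Differentiable ℂ f)
    (σ : ℝ) (hσ : 0 < σ) (B : ℝ) (hB : 0 < B)
    (hgrowth : ∀ ε > (0 : ℝ), ∃ A > (0 : ℝ), ∀ z : ℂ, ‖f z‖ ≤ A * Real.exp ((σ + ε) * ‖z‖))
    (hreal : ∀ x : ℝ, ‖f x‖ ≤ B) :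
    ∀ x y : ℝ, ‖f (x + y * Complex.I)‖ ≤ B * Real.exp (σ * |y|) := by
  intro x y
  rcases le_total 0 y with hy | hy
  · have := phragmen_lindelof_upper f hf σ hσ B hB hgrowth hreal (x + y * Complex.I)
      (by simp [hy])
    simpa [_root_.abs_of_nonneg hy] using this
  · have hgrowth' : ∀ ε > (0 : ℝ), ∃ A > (0 : ℝ), ∀ z : ℂ,
        ‖(fun w => f (-w)) z‖ ≤ A * Real.exp ((σ + ε) * ‖z‖) := by
      intro ε hε
      obtain ⟨A, hA, hAb⟩ := hgrowth ε hε
      exact ⟨A, hA, fun z => by simpa using hAb (-z)⟩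
    have hreal' : ∀ t : ℝ, ‖(fun w => f (-w)) (t : ℂ)‖ ≤ B := fun t => by
      simpa using hreal (-t)
    have := phragmen_lindelof_upper (fun w => f (-w)) (hf.comp differentiable_neg)
      σ hσ B hB hgrowth' hreal' (-(x + y * Complex.I)) (by simp; linarith)
    simp only [neg_neg] at this
    have him : (-(x + y * Complex.I)).im = -y := by simp
    rw [him] at this
    simpa [_root_.abs_of_nonpos hy] using this
end

section
/- Phragmén–Lindelöf on the upper half-plane: let f be continuous on the closed upper half-plane and holomorphic on the open upper half-plane, with |f(x)| ≤ B for all real x, and suppose for every ε > 0 there exists A_ε with |f(z)| ≤ A_ε exp((σ+ε)|z|) for Im z ≥ 0. Then |f(x + iy)| ≤ B exp(σ y) for all y ≥ 0. -/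
open Real Complex

theorem phragmen_lindelof_upper_half_plane (f : ℂ → ℂ)
    (hcont : ContinuousOn f {z : ℂ | 0 ≤ z.im})
    (hholo : DifferentiableOn ℂ f {z : ℂ | 0 < z.im})
    (σ : ℝ) (hσ : 0 < σ) (B : ℝ) (hB : 0 < B)
    (hgrowth : ∀ ε > (0 : ℝ), ∃ A > (0 : ℝ), ∀ z : ℂ, 0 ≤ z.im →
      ‖f z‖ ≤ A * Real.exp ((σ + ε) * ‖z‖))
    (hreal : ∀ x : ℝ, ‖f x‖ ≤ B) :
    ∀ (x : ℝ) (y : ℝ), 0 ≤ y → ‖f (x + y * Complex.I)‖ ≤ B * Real.exp (σ * y) := by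
  intro x y hy
  -- reduce to the bound with σ replaced by σ + ε for every ε > 0
  suffices h : ∀ ε > (0 : ℝ), ‖f (x + y * Complex.I)‖ ≤ B * Real.exp ((σ + ε) * y) by
    have htend : Filter.Tendsto (fun ε : ℝ => B * Real.exp ((σ + ε) * y))
        (nhdsWithin 0 (Set.Ioi 0)) (nhds (B * Real.exp (σ * y))) := by
      have : Continuous fun ε : ℝ => B * Real.exp ((σ + ε) * y) := by continuity
      have := this.tendsto 0
      simpa using this.mono_left nhdsWithin_le_nhds
    refine ge_of_tendsto htend ?_
    filter_upwards [self_mem_nhdsWithin] with ε hε using h ε hε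
  intro ε hε
  obtain ⟨A, hA, hAf⟩ := hgrowth (ε / 2) (by linarith)
  set F : ℂ → ℂ := fun z => f (Complex.I * z) *
    Complex.exp (Complex.I * (σ + ε) * (Complex.I * z)) with hF
  have hnormexp : ∀ z : ℂ,
      ‖Complex.exp (Complex.I * (σ + ε) * (Complex.I * z))‖ = Real.exp (-(σ + ε) * z.re) := by
    intro z
    rw [Complex.norm_exp]
    congr 1
    simp [Complex.mul_re, Complex.mul_im]
    ring
  have him_mul : ∀ z : ℂ, (Complex.I * z).im = z.re := by
    intro z; simp
  have hFnorm : ∀ z : ℂ, ‖F z‖ = ‖f (Complex.I * z)‖ * Real.exp (-(σ + ε) * z.re) := by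
    intro z; rw [hF]; simp only [norm_mul, hnormexp]
  -- apply Phragmén–Lindelöf on right half plane to F
  have key : ∀ z : ℂ, 0 ≤ z.re → ‖F z‖ ≤ B := by
    intro z hz
    refine PhragmenLindelof.right_half_plane_of_bounded_on_real (f := F) ?_ ?_ ?_ ?_ hz
    · constructor
      · intro w hw
        have hw' : 0 < (Complex.I * w).im := by rwa [him_mul]
        have hopen : IsOpen {z : ℂ | 0 < z.im} := isOpen_lt continuous_const Complex.continuous_im
        have hfd : DifferentiableAt ℂ f (Complex.I * w) :=
          hholo.differentiableAt (hopen.mem_nhds hw')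
        apply DifferentiableAt.differentiableWithinAt
        exact (hfd.comp w ((differentiableAt_const _).mul differentiableAt_id)).mul
          (Complex.differentiable_exp.differentiableAt.comp w
            (((differentiableAt_const _).mul ((differentiableAt_const _).mul differentiableAt_id))))
      · have hcl : closure {z : ℂ | 0 < z.re} = {z : ℂ | 0 ≤ z.re} := closure_setOf_lt_re 0
        rw [hcl]
        apply ContinuousOn.mul
        · refine (hcont.comp (continuous_const.mul continuous_id).continuousOn ?_)
          intro w hw; simpa [him_mul] using hw
        · exact (Continuous.continuousOn (by continuity))
    · refine ⟨1, one_lt_two, σ + ε / 2, ?_⟩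
      rw [Asymptotics.isBigO_iff]
      refine ⟨A, ?_⟩
      filter_upwards [Filter.inter_mem (Filter.univ_mem)
        (Filter.mem_inf_of_right (Filter.mem_principal_self _))] with z hz
      have hzre : 0 < z.re := hz.2
      have h1 : ‖f (Complex.I * z)‖ ≤ A * Real.exp ((σ + ε / 2) * ‖z‖) := by
        have := hAf (Complex.I * z) (by rw [him_mul]; exact hzre.le)
        simpa using this
      have h2 : Real.exp (-(σ + ε) * z.re) ≤ 1 := by
        rw [Real.exp_le_one_iff]
        nlinarith
      rw [hFnorm]
      calc ‖f (Complex.I * z)‖ * Real.exp (-(σ + ε) * z.re)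
          ≤ (A * Real.exp ((σ + ε / 2) * ‖z‖)) * 1 :=
            mul_le_mul h1 h2 (Real.exp_pos _).le (by positivity)
        _ ≤ A * ‖Real.exp ((σ + ε / 2) * ‖z‖ ^ (1 : ℝ))‖ := by
            rw [mul_one, Real.norm_eq_abs, Real.abs_exp, Real.rpow_one]
    · refine ⟨A, ?_⟩
      rw [Filter.eventually_map]
      filter_upwards [Filter.eventually_ge_atTop (0 : ℝ)] with t ht
      have h1 : ‖f (Complex.I * t)‖ ≤ A * Real.exp ((σ + ε / 2) * t) := by
        have := hAf (Complex.I * t) (by simp [him_mul]; exact ht)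
        simpa [_root_.abs_of_nonneg ht] using this
      have := hFnorm (t : ℂ)
      rw [this]
      simp only [Complex.ofReal_re]
      calc ‖f (Complex.I * t)‖ * Real.exp (-(σ + ε) * t)
          ≤ (A * Real.exp ((σ + ε / 2) * t)) * Real.exp (-(σ + ε) * t) :=
            mul_le_mul_of_nonneg_right h1 (Real.exp_pos _).le
        _ = A * Real.exp (-(ε / 2) * t) := by
            rw [mul_assoc, ← Real.exp_add]; ring_nf
        _ ≤ A * 1 := by
            refine mul_le_mul_of_nonneg_left ?_ hA.le
            rw [Real.exp_le_one_iff]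
            nlinarith
        _ = A := mul_one A
    · intro t
      have : (Complex.I * (t * Complex.I) : ℂ) = ((-t : ℝ) : ℂ) := by
        push_cast; ring_nf; simp [Complex.I_sq]
      rw [hFnorm]
      simp only [Complex.mul_re, Complex.I_re, Complex.I_im, Complex.ofReal_re,
        Complex.ofReal_im]
      rw [this]
      calc ‖f ((-t : ℝ) : ℂ)‖ * Real.exp (-(σ + ε) * (t * Complex.I).re)
          ≤ B * 1 := by
            refine mul_le_mul (hreal (-t)) ?_ (Real.exp_pos _).le hB.le
            simp [Real.exp_le_one_iff]
        _ = B := mul_one B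
  -- specialize to z₀ = y - x * I
  have hz0 : (Complex.I * ((y : ℂ) - x * Complex.I)) = x + y * Complex.I := by
    ring_nf; simp [Complex.I_sq]
  have := key ((y : ℂ) - x * Complex.I) (by simp [hy])
  rw [hFnorm, hz0] at this
  have hre : ((y : ℂ) - x * Complex.I).re = y := by simp
  rw [hre] at this
  have h2 := mul_le_mul_of_nonneg_right this (Real.exp_pos ((σ + ε) * y)).le
  rwa [mul_assoc, ← Real.exp_add, neg_mul, neg_add_cancel, Real.exp_zero, mul_one] at h2
end
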